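/- Let X : Fin n → Matrix (Fin D) (Fin D) ℂ be positive semidefinite matrices and let 𝔥(X) denote the infimum of the real traces of Hermitian matrices H such that H − X i is positive semidefinite for every i. Then 𝔥(X) ≤ ∑ i, Re (Matrix.trace (X i)); moreover, if the matrices have pairwise orthogonal supports (X i * X j = 0 whenever i ≠ j), then 𝔥(X) = ∑ i, Re (Matrix.trace (X i)). -/

import Mathlib

open Matrix
open scoped Kronecker ComplexOrder

noncomputable section

/-- A measurement (POVM): a finite family of positive semidefinite matrices summing to `1`. -/
def IsMeasurement {ι κ : Type*} [Fintype ι] [DecidableEq ι] [Fintype κ]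
    (A : κ → Matrix ι ι ℂ) : Prop :=
  (∀ x, (A x).PosSemidef) ∧ ∑ x, A x = 1

/-- `A` is a post-processing of `B`: `A ⪯ B`. -/
def PostProc {ι : Type*} {n m : ℕ}
    (A : Fin n → Matrix ι ι ℂ) (B : Fin m → Matrix ι ι ℂ) : Prop :=
  ∃ μ : Fin n → Fin m → ℝ,
    (∀ x y, 0 ≤ μ x y) ∧ (∀ y, ∑ x, μ x y = 1) ∧
    (∀ x, A x = ∑ y, (μ x y : ℂ) • B y)

/-- The outer product `|E⟩⟨F|` of the vectorizations of two matrices. -/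
def outerProd {ι : Type*} (E F : Matrix ι ι ℂ) : Matrix (ι × ι) (ι × ι) ℂ :=
  Matrix.of fun p q => E p.1 p.2 * star (F q.1 q.2)

/-- The (un-normalized) Fisher information map of a measurement. -/
noncomputable def Fisher {ι κ : Type*} [Fintype ι] [Fintype κ]
    (A : κ → Matrix ι ι ℂ) : Matrix (ι × ι) (ι × ι) ℂ :=
  ∑ x, (Matrix.trace (A x))⁻¹ • outerProd (A x) (A x)

/-- The positive semidefinite square root, as `Matrix.PosSemidef.sqrt` was defined in the older Mathlib. -/
noncomputable def PosSemidef.sqrt' {ι : Type*} [Fintype ι] [DecidableEq ι] {A : Matrix ι ι ℂ}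
    (hA : A.PosSemidef) : Matrix ι ι ℂ :=
  hA.1.eigenvectorUnitary.1 * diagonal ((↑) ∘ (√·) ∘ hA.1.eigenvalues) *
  (star hA.1.eigenvectorUnitary : Matrix ι ι ℂ)

/-- The generalized Fisher information map of a measurement, relative to a
positive definite state `ρ` (with positive semidefinite square root `ρ^{1/2}`). -/
noncomputable def FisherRho {ι κ : Type*} [Fintype ι] [DecidableEq ι] [Fintype κ]
    {ρ : Matrix ι ι ℂ} (hρ : ρ.PosDef) (A : κ → Matrix ι ι ℂ) :
    Matrix (ι × ι) (ι × ι) ℂ :=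
  ∑ x, (Matrix.trace (ρ * A x))⁻¹ •
    outerProd (PosSemidef.sqrt' hρ.posSemidef * A x) (PosSemidef.sqrt' hρ.posSemidef * A x)

/-- The height of a finite family of self-adjoint matrices: the infimum of the traces of
Hermitian matrices dominating every member in the Loewner order. -/
noncomputable def height {ι κ : Type*} [Fintype ι] [Fintype κ]
    (X : κ → Matrix ι ι ℂ) : ℝ :=
  sInf { t : ℝ | ∃ H : Matrix ι ι ℂ, H.IsHermitian ∧
    (∀ i, (H - X i).PosSemidef) ∧ t = (Matrix.trace H).re }
section aux
variable {m : Type*} [Fintype m] [DecidableEq m]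

lemma re_nonneg_of_nonneg' {z : ℂ} (h : 0 ≤ z) : 0 ≤ z.re := by
  simpa using (Complex.le_def.mp h).1

lemma trace_nonneg' {A : Matrix m m ℂ} (hA : A.PosSemidef) : 0 ≤ A.trace := by
  exact hA.trace_nonneg

lemma trace_mul_nonneg' {A B : Matrix m m ℂ} (hA : A.PosSemidef) (hB : B.PosSemidef) :
    0 ≤ (A * B).trace := by
  open scoped MatrixOrder in
  obtain ⟨S, hS⟩ : ∃ S : Matrix m m ℂ, S.IsHermitian ∧ S * S = A := by
    have hA0 : 0 ≤ A := hA.nonneg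
    refine ⟨CFC.sqrt A, ?_, CFC.sqrt_mul_sqrt_self A hA0⟩
    exact (CFC.sqrt_nonneg A).posSemidef.1
  have h : A * B = S * (S * B) := by
    rw [← mul_assoc, hS.2]
  rw [h, Matrix.trace_mul_comm]
  have hps : (S * B * S).PosSemidef := by
    have := hB.mul_mul_conjTranspose_same S
    rwa [hS.1.eq] at this
  exact trace_nonneg' hps

set_option linter.unusedSectionVars false in
lemma posSemidef_sum' {κ : Type*} (s : Finset κ) (f : κ → Matrix m m ℂ)
    (hf : ∀ j ∈ s, (f j).PosSemidef) : (∑ j ∈ s, f j).PosSemidef := by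
  classical
  induction s using Finset.induction_on with
  | empty => simpa using Matrix.PosSemidef.zero
  | insert _ _ hni ih =>
    rw [Finset.sum_insert hni]
    exact (hf _ (Finset.mem_insert_self _ _)).add
      (ih fun j hj => hf j (Finset.mem_insert_of_mem hj))

set_option linter.unusedSectionVars false in
lemma isHermitian_sum' {κ : Type*} (s : Finset κ) (f : κ → Matrix m m ℂ)
    (hf : ∀ j ∈ s, (f j).IsHermitian) : (∑ j ∈ s, f j).IsHermitian := by
  rw [Matrix.IsHermitian, conjTranspose_sum]
  exact Finset.sum_congr rfl fun j hj => (hf j hj).eq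


variable {m : Type*} [Fintype m] [DecidableEq m]

/-- The support projection of a positive semidefinite matrix. -/
noncomputable def suppProj {A : Matrix m m ℂ} (hA : A.PosSemidef) : Matrix m m ℂ :=
  (hA.1.eigenvectorUnitary : Matrix m m ℂ) *
    diagonal (fun k => if hA.1.eigenvalues k = 0 then (0:ℂ) else 1) *
    star (hA.1.eigenvectorUnitary : Matrix m m ℂ)

lemma star_mul_self_eigU {A : Matrix m m ℂ} (hA : A.PosSemidef) :
    star (hA.1.eigenvectorUnitary : Matrix m m ℂ) * (hA.1.eigenvectorUnitary : Matrix m m ℂ) = 1 :=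
  Unitary.star_mul_self_of_mem (hA.1.eigenvectorUnitary).2

lemma suppProj_isHermitian {A : Matrix m m ℂ} (hA : A.PosSemidef) :
    (suppProj hA).IsHermitian := by
  unfold suppProj
  set U := (hA.1.eigenvectorUnitary : Matrix m m ℂ)
  set d := fun k => if hA.1.eigenvalues k = 0 then (0:ℂ) else 1 with hd
  have hsd : star d = d := by
    funext k
    by_cases h : hA.1.eigenvalues k = 0 <;> simp [hd, h]
  rw [IsHermitian]
  simp only [conjTranspose_mul, star_eq_conjTranspose, conjTranspose_conjTranspose,
    diagonal_conjTranspose, hsd]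
  rw [mul_assoc]

lemma suppProj_mul_suppProj {A : Matrix m m ℂ} (hA : A.PosSemidef) :
    suppProj hA * suppProj hA = suppProj hA := by
  unfold suppProj
  set U := (hA.1.eigenvectorUnitary : Matrix m m ℂ) with hU
  set d := fun k => if hA.1.eigenvalues k = 0 then (0:ℂ) else 1 with hd
  have h1 : star U * U = 1 := star_mul_self_eigU hA
  have h2 : diagonal d * diagonal d = diagonal d := by
    rw [diagonal_mul_diagonal]
    refine congrArg diagonal (funext fun k => ?_)
    by_cases h : hA.1.eigenvalues k = 0 <;> simp [hd, h]
  calc U * diagonal d * star U * (U * diagonal d * star U)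
      = U * diagonal d * (star U * U) * diagonal d * star U := by
        simp only [mul_assoc]
    _ = U * (diagonal d * diagonal d) * star U := by rw [h1]; simp only [mul_one, mul_assoc]
    _ = U * diagonal d * star U := by rw [h2, mul_assoc]

lemma suppProj_posSemidef {A : Matrix m m ℂ} (hA : A.PosSemidef) :
    (suppProj hA).PosSemidef := by
  have := posSemidef_conjTranspose_mul_self (suppProj hA)
  rwa [(suppProj_isHermitian hA).eq, suppProj_mul_suppProj hA] at this

lemma suppProj_mul_self {A : Matrix m m ℂ} (hA : A.PosSemidef) :
    suppProj hA * A = A := by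
  have key : ∀ B : Matrix m m ℂ,
      B = (hA.1.eigenvectorUnitary : Matrix m m ℂ) *
        diagonal (RCLike.ofReal ∘ hA.1.eigenvalues) *
        star (hA.1.eigenvectorUnitary : Matrix m m ℂ) → suppProj hA * B = B := by
    intro B hB
    subst hB
    unfold suppProj
    set U := (hA.1.eigenvectorUnitary : Matrix m m ℂ) with hU
    set d := fun k => if hA.1.eigenvalues k = 0 then (0:ℂ) else 1 with hd
    set e : m → ℂ := RCLike.ofReal ∘ hA.1.eigenvalues with he
    have h1 : star U * U = 1 := star_mul_self_eigU hA
    have h2 : diagonal d * diagonal e = diagonal e := by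
      rw [diagonal_mul_diagonal]
      refine congrArg diagonal (funext fun k => ?_)
      by_cases h : hA.1.eigenvalues k = 0 <;> simp [hd, he, h, Function.comp]
    calc U * diagonal d * star U * (U * diagonal e * star U)
        = U * diagonal d * (star U * U) * diagonal e * star U := by simp only [mul_assoc]
      _ = U * (diagonal d * diagonal e) * star U := by rw [h1]; simp only [mul_one, mul_assoc]
      _ = U * diagonal e * star U := by rw [h2]
  exact key A hA.1.spectral_theorem

lemma mul_suppProj_eq_zero {A M : Matrix m m ℂ} (hA : A.PosSemidef) (h : M * A = 0) :
    M * suppProj hA = 0 := by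
  set U := (hA.1.eigenvectorUnitary : Matrix m m ℂ) with hU
  set d := fun k => if hA.1.eigenvalues k = 0 then (0:ℂ) else 1 with hd
  have h1 : star U * U = 1 := star_mul_self_eigU hA
  have key : M * U * diagonal (RCLike.ofReal ∘ hA.1.eigenvalues : m → ℂ) = 0 := by
    have h' : M * (U * diagonal (RCLike.ofReal ∘ hA.1.eigenvalues : m → ℂ) * star U) = 0 := by
      have hs : A = U * diagonal (RCLike.ofReal ∘ hA.1.eigenvalues : m → ℂ) * star U :=
        hA.1.spectral_theorem
      rw [← hs]; exact h
    have := congrArg (· * U) h'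
    simpa only [mul_assoc, h1, mul_one, zero_mul] using this
  have key2 : M * U * diagonal d = 0 := by
    ext a k
    have hk := congrFun (congrFun key a) k
    simp only [mul_diagonal, Matrix.zero_apply, Function.comp] at hk ⊢
    by_cases h0 : hA.1.eigenvalues k = 0
    · simp [hd, h0]
    · have hne : (hA.1.eigenvalues k : ℂ) ≠ 0 := by exact_mod_cast h0
      have hMU : (M * U) a k = 0 := by
        rcases mul_eq_zero.mp hk with h' | h'
        · exact h'
        · exact absurd h' hne
      simp [hd, h0, hMU]
  unfold suppProj
  calc M * (U * diagonal d * star U) = (M * U * diagonal d) * star U := by simp only [mul_assoc]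
    _ = 0 := by rw [key2, zero_mul]

lemma suppProj_mul_eq_zero {A M : Matrix m m ℂ} (hA : A.PosSemidef) (h : A * M = 0) :
    suppProj hA * M = 0 := by
  have h' : Mᴴ * A = 0 := by
    have := congrArg conjTranspose h
    rwa [conjTranspose_mul, hA.1.eq, conjTranspose_zero] at this
  have h2 := congrArg conjTranspose (mul_suppProj_eq_zero hA h')
  rwa [conjTranspose_mul, conjTranspose_conjTranspose, (suppProj_isHermitian hA).eq,
    conjTranspose_zero] at h2

end aux


/-- The height is bounded by the sum of the traces, with equality for matrices with
pairwise orthogonal supports. -/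
theorem stmt15 {D n : ℕ} (X : Fin n → Matrix (Fin D) (Fin D) ℂ)
    (hX : ∀ i, (X i).PosSemidef) :
    height X ≤ ∑ i, (Matrix.trace (X i)).re ∧
    ((∀ i j, i ≠ j → X i * X j = 0) → height X = ∑ i, (Matrix.trace (X i)).re) := by
  set Sset := { t : ℝ | ∃ H : Matrix (Fin D) (Fin D) ℂ, H.IsHermitian ∧
    (∀ i, (H - X i).PosSemidef) ∧ t = (Matrix.trace H).re } with hSset
  have hheight : height X = sInf Sset := rfl
  rcases Nat.eq_zero_or_pos n with hn | hn
  · -- n = 0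
    subst hn
    have hsum : (∑ i : Fin 0, (Matrix.trace (X i)).re) = 0 := by simp
    have hzero : height X = 0 := by
      rw [hheight]
      rcases Nat.eq_zero_or_pos D with hD | hD
      · subst hD
        have hS : Sset = {0} := by
          ext t
          constructor
          · rintro ⟨H, -, -, rfl⟩
            simp [Matrix.trace]
          · rintro rfl
            exact ⟨0, Matrix.isHermitian_zero, fun i => i.elim0, by simp⟩
        rw [hS, csInf_singleton]
      · have hnb : ¬ BddBelow Sset := by
          rintro ⟨b, hb⟩
          have hmem : b - 1 ∈ Sset := by
            refine ⟨(((b - 1) / D : ℝ) : ℂ) • 1, ?_, fun i => i.elim0, ?_⟩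
            · rw [Matrix.IsHermitian, conjTranspose_smul, conjTranspose_one]
              norm_num
            · rw [Matrix.trace_smul, Matrix.trace_one]
              simp only [smul_eq_mul, Fintype.card_fin]
              push_cast
              field_simp
              simp
          have := hb hmem
          linarith
        exact Real.sInf_of_not_bddBelow hnb
    rw [hsum, hzero]
    exact ⟨le_refl 0, fun _ => rfl⟩
  · -- n > 0
    set i0 : Fin n := ⟨0, hn⟩
    have hlb0 : ∀ t ∈ Sset, (Matrix.trace (X i0)).re ≤ t := by
      rintro t ⟨H, hH, hd, rfl⟩
      have h1 : Matrix.trace H = Matrix.trace (H - X i0) + Matrix.trace (X i0) := by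
        rw [← Matrix.trace_add, sub_add_cancel]
      rw [h1, Complex.add_re]
      have := re_nonneg_of_nonneg' (trace_nonneg' (hd i0))
      linarith
    have hmem : (∑ i, (Matrix.trace (X i)).re) ∈ Sset := by
      refine ⟨∑ j, X j, isHermitian_sum' _ _ (fun j _ => (hX j).1), fun i => ?_, ?_⟩
      · have he : (∑ j, X j) - X i = ∑ j ∈ Finset.univ.erase i, X j := by
          rw [Finset.sum_erase_eq_sub (Finset.mem_univ i)]
        rw [he]
        exact posSemidef_sum' _ _ fun j _ => hX j
      · rw [Matrix.trace_sum, Complex.re_sum]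
    constructor
    · rw [hheight]
      exact csInf_le ⟨_, hlb0⟩ hmem
    · intro horth
      obtain ⟨P, hPP, hPmul, hPself, hPpsd, hPherm⟩ :
          ∃ P : Fin n → Matrix (Fin D) (Fin D) ℂ,
            (∀ i j, i ≠ j → P i * P j = 0) ∧ (∀ i, P i * P i = P i) ∧
            (∀ i, P i * X i = X i) ∧ (∀ i, (P i).PosSemidef) ∧
            (∀ i, (P i).IsHermitian) := by
        refine ⟨fun i => suppProj (hX i), ?_, ?_, ?_, ?_, ?_⟩
        · exact fun i j hij =>
            mul_suppProj_eq_zero (hX j) (suppProj_mul_eq_zero (hX i) (horth i j hij))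
        · exact fun i => suppProj_mul_suppProj (hX i)
        · exact fun i => suppProj_mul_self (hX i)
        · exact fun i => suppProj_posSemidef (hX i)
        · exact fun i => suppProj_isHermitian (hX i)
      set T : Matrix (Fin D) (Fin D) ℂ := ∑ i, P i with hT
      clear_value T
      have hTherm : T.IsHermitian := by
        rw [hT]; exact isHermitian_sum' _ _ fun j _ => hPherm j
      have hTT : T * T = T := by
        rw [hT, Finset.sum_mul_sum]
        refine Finset.sum_congr rfl fun i _ => ?_
        rw [Finset.sum_eq_single i (fun j _ hj => hPP i j (Ne.symm hj)) (by simp), hPmul]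
      have hQ : (1 - T).PosSemidef := by
        have hQherm : (1 - T).IsHermitian := Matrix.isHermitian_one.sub hTherm
        have hQQ : (1 - T) * (1 - T) = 1 - T := by
          rw [sub_mul, one_mul, mul_sub, mul_one, hTT, sub_self, sub_zero]
        have := posSemidef_conjTranspose_mul_self (1 - T)
        rwa [hQherm.eq, hQQ] at this
      have key : ∀ t ∈ Sset, (∑ i, (Matrix.trace (X i)).re) ≤ t := by
        rintro t ⟨H, hH, hd, rfl⟩
        have hHpsd : H.PosSemidef := by
          have := (hd i0).add (hX i0)
          rwa [sub_add_cancel] at this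
        have h1 : Matrix.trace H = Matrix.trace (T * H) + Matrix.trace ((1 - T) * H) := by
          rw [← Matrix.trace_add, ← add_mul]
          have : T + (1 - T) = 1 := by abel
          rw [this, one_mul]
        have h2 : 0 ≤ (Matrix.trace ((1 - T) * H)).re :=
          re_nonneg_of_nonneg' (trace_mul_nonneg' hQ hHpsd)
        have h3 : Matrix.trace (T * H) = ∑ i, Matrix.trace (P i * H) := by
          rw [hT, Finset.sum_mul, Matrix.trace_sum]
        have h4 : ∀ i, (Matrix.trace (X i)).re ≤ (Matrix.trace (P i * H)).re := by
          intro i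
          have hsplit : P i * H = P i * (H - X i) + X i := by
            rw [mul_sub, hPself i, sub_add_cancel]
          rw [hsplit, Matrix.trace_add, Complex.add_re]
          have := re_nonneg_of_nonneg'
            (trace_mul_nonneg' (hPpsd i) (hd i))
          linarith
        have h5 : (∑ i, (Matrix.trace (X i)).re) ≤ (Matrix.trace (T * H)).re := by
          rw [h3, Complex.re_sum]
          exact Finset.sum_le_sum fun i _ => h4 i
        rw [h1, Complex.add_re]
        linarith
      rw [hheight]
      exact le_antisymm (csInf_le ⟨_, key⟩ hmem) (le_csInf ⟨_, hmem⟩ key)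

end
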